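/- For every uniformly bounded and uniformly equicontinuous family F of bounded continuous functions ℝ^d → ℝ one has lim_{ε→0} sup_{f∈F} | ε^d Σ_{x∈Ω_ε} f(x) − ∫_Ω f(x) dx | = 0 (the integral with respect to Lebesgue measure on Ω). In particular there exists C ≥ 1 such that C^{-1} ≤ ε^d · #Ω_ε ≤ C for all ε ∈ (0,1). -/

import Mathlib

open scoped Classical MeasureTheory
open Filter MeasureTheory Set Metric
open scoped ENNReal Topology

noncomputable section

/-- A bounded Lipschitz domain in `ℝ^d` containing locally, near every boundary point and
up to an isometry of `ℝ^d`, the open region strictly above the graph of a Lipschitz function. -/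
def IsLipschitzDomain (d : ℕ) (Ω : Set (EuclideanSpace ℝ (Fin d))) : Prop :=
  IsOpen Ω ∧ IsConnected Ω ∧ Bornology.IsBounded Ω ∧
    ∀ p ∈ frontier Ω, ∃ U ∈ nhds p,
      ∃ (φ : EuclideanSpace ℝ (Fin d) ≃ᵢ EuclideanSpace ℝ (Fin d)) (j : Fin d)
        (L : NNReal) (g : (Fin d → ℝ) → ℝ),
        LipschitzWith L g ∧
          ∀ x ∈ U, (x ∈ Ω ↔ g (fun i => if i = j then 0 else φ x i) < φ x j)

/-- The points of the rescaled lattice `εℤ^d`. -/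
def latticePts (d : ℕ) (ε : ℝ) : Set (EuclideanSpace ℝ (Fin d)) :=
  {x | ∀ i, ∃ n : ℤ, x i = n * ε}

/-- The union of all closed segments joining nearest-neighbour points of `εℤ^d`. -/
def gridSet (d : ℕ) (ε : ℝ) : Set (EuclideanSpace ℝ (Fin d)) :=
  ⋃ x ∈ latticePts d ε, ⋃ y ∈ latticePts d ε, ⋃ (_ : dist x y = ε), segment ℝ x y

/-- The discrete domain `Ω_ε`. -/
def discDomain {d : ℕ} (Ω : Set (EuclideanSpace ℝ (Fin d))) (ε : ℝ) :
    Set (EuclideanSpace ℝ (Fin d)) :=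
  connectedComponentIn (Ω ∩ gridSet d ε) 0 ∩ latticePts d ε

/-- The discrete inner boundary `∂Ω_ε`. -/
def innerBdry {d : ℕ} (Ω : Set (EuclideanSpace ℝ (Fin d))) (ε : ℝ) :
    Set (EuclideanSpace ℝ (Fin d)) :=
  {x ∈ discDomain Ω ε | ({y ∈ discDomain Ω ε | dist x y = ε}).ncard < 2 * d}


namespace DVM

variable {d : ℕ}

lemma coord_le_dist (x y : EuclideanSpace ℝ (Fin d)) (i : Fin d) :
    |x i - y i| ≤ dist x y := by
  rw [EuclideanSpace.dist_eq]
  have h1 : |x i - y i| = Real.sqrt (dist (x i) (y i) ^ 2) := by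
    rw [Real.sqrt_sq_eq_abs, Real.dist_eq, abs_abs]
  rw [h1]
  apply Real.sqrt_le_sqrt
  exact Finset.single_le_sum (f := fun j => dist (x j) (y j) ^ 2)
    (fun j _ => sq_nonneg _) (Finset.mem_univ i)

lemma dist_le_of_coords (x y : EuclideanSpace ℝ (Fin d)) {r : ℝ} (hr : 0 ≤ r)
    (h : ∀ i, |x i - y i| ≤ r) : dist x y ≤ d * r := by
  rw [EuclideanSpace.dist_eq]
  have h1 : ∑ i, dist (x i) (y i) ^ 2 ≤ (d : ℝ) * r ^ 2 := by
    calc ∑ i, dist (x i) (y i) ^ 2 ≤ ∑ _i : Fin d, r ^ 2 := by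
          apply Finset.sum_le_sum
          intro i _
          have := h i
          rw [Real.dist_eq]
          nlinarith [abs_nonneg (x i - y i)]
      _ = (d : ℝ) * r ^ 2 := by simp [Finset.sum_const, Finset.card_univ, nsmul_eq_mul]
  have h2 : (d : ℝ) * r ^ 2 ≤ ((d : ℝ) * r) ^ 2 := by
    have : (1 : ℝ) ≤ d ∨ (d : ℝ) = 0 := by
      rcases Nat.eq_zero_or_pos d with h | h
      · exact Or.inr (by exact_mod_cast h)
      · exact Or.inl (by exact_mod_cast h)
    rcases this with h | h
    · nlinarith [sq_nonneg r]
    · simp [h]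
  calc Real.sqrt (∑ i, dist (x i) (y i) ^ 2) ≤ Real.sqrt (((d:ℝ) * r) ^ 2) :=
        Real.sqrt_le_sqrt (le_trans h1 h2)
    _ = |(d:ℝ) * r| := Real.sqrt_sq_eq_abs _
    _ = (d:ℝ) * r := abs_of_nonneg (by positivity)

lemma dist_single (x y : EuclideanSpace ℝ (Fin d)) (i0 : Fin d)
    (h : ∀ i, i ≠ i0 → x i = y i) : dist x y = |x i0 - y i0| := by
  rw [EuclideanSpace.dist_eq]
  have : ∑ i, dist (x i) (y i) ^ 2 = dist (x i0) (y i0) ^ 2 := by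
    apply Finset.sum_eq_single
    · intro b _ hb; rw [h b hb]; simp
    · intro hb; exact absurd (Finset.mem_univ i0) hb
  rw [this, Real.dist_eq, Real.sqrt_sq_eq_abs, abs_abs]

/-- Round a point down to the lattice. -/
def roundPt (ε : ℝ) (y : EuclideanSpace ℝ (Fin d)) : EuclideanSpace ℝ (Fin d) :=
  WithLp.toLp 2 (fun i => (⌊y i / ε⌋ : ℝ) * ε)

lemma roundPt_mem_lattice (ε : ℝ) (y : EuclideanSpace ℝ (Fin d)) :
    roundPt ε y ∈ latticePts d ε := fun i => ⟨⌊y i / ε⌋, rfl⟩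

lemma roundPt_coord_le {ε : ℝ} (hε : 0 < ε) (y : EuclideanSpace ℝ (Fin d)) (i : Fin d) :
    |roundPt ε y i - y i| ≤ ε := by
  have h1 : (⌊y i / ε⌋ : ℝ) ≤ y i / ε := Int.floor_le _
  have h2 : y i / ε < ⌊y i / ε⌋ + 1 := Int.lt_floor_add_one _
  rw [abs_le]
  constructor
  · show -ε ≤ roundPt ε y i - y i
    have : (⌊y i / ε⌋ : ℝ) * ε ≥ (y i / ε - 1) * ε := by nlinarith
    have hy : (y i / ε) * ε = y i := div_mul_cancel₀ _ (ne_of_gt hε)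
    simp only [roundPt, PiLp.toLp_apply, WithLp.ofLp_toLp] at *
    nlinarith
  · show roundPt ε y i - y i ≤ ε
    have : (⌊y i / ε⌋ : ℝ) * ε ≤ (y i / ε) * ε := by nlinarith
    have hy : (y i / ε) * ε = y i := div_mul_cancel₀ _ (ne_of_gt hε)
    simp only [roundPt, PiLp.toLp_apply, WithLp.ofLp_toLp] at *
    nlinarith

lemma roundPt_dist_le {ε : ℝ} (hε : 0 < ε) (y : EuclideanSpace ℝ (Fin d)) :
    dist (roundPt ε y) y ≤ d * ε :=
  dist_le_of_coords _ _ hε.le (roundPt_coord_le hε y)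

lemma roundPt_lattice_fix {ε : ℝ} (hε : 0 < ε) {x : EuclideanSpace ℝ (Fin d)}
    (hx : x ∈ latticePts d ε) : roundPt ε x = x := by
  ext i
  obtain ⟨n, hn⟩ := hx i
  show (⌊x i / ε⌋ : ℝ) * ε = x i
  rw [hn]
  have : (n : ℝ) * ε / ε = (n : ℝ) := mul_div_cancel_right₀ _ (ne_of_gt hε)
  rw [this, Int.floor_intCast]

lemma mem_cube_roundPt {ε : ℝ} (hε : 0 < ε) (y : EuclideanSpace ℝ (Fin d)) (i : Fin d) :
    roundPt ε y i ≤ y i ∧ y i < roundPt ε y i + ε := by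
  constructor
  · show (⌊y i / ε⌋ : ℝ) * ε ≤ y i
    have h1 : (⌊y i / ε⌋ : ℝ) ≤ y i / ε := Int.floor_le _
    have hy : (y i / ε) * ε = y i := div_mul_cancel₀ _ (ne_of_gt hε)
    nlinarith
  · show y i < (⌊y i / ε⌋ : ℝ) * ε + ε
    have h2 : y i / ε < ⌊y i / ε⌋ + 1 := Int.lt_floor_add_one _
    have hy : (y i / ε) * ε = y i := div_mul_cancel₀ _ (ne_of_gt hε)
    nlinarith

lemma floor_diff_le_one {a b : ℝ} (h : |a - b| < 1) : |⌊a⌋ - ⌊b⌋| ≤ 1 := by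
  rw [abs_lt] at h
  have h1 : ⌊a⌋ ≤ ⌊b⌋ + 1 := by
    have : a < b + 1 := by linarith
    have := Int.floor_le_floor this.le
    calc ⌊a⌋ ≤ ⌊b + 1⌋ := this
      _ = ⌊b⌋ + 1 := by rw [Int.floor_add_one]
  have h2 : ⌊b⌋ ≤ ⌊a⌋ + 1 := by
    have : b < a + 1 := by linarith
    have := Int.floor_le_floor this.le
    calc ⌊b⌋ ≤ ⌊a + 1⌋ := this
      _ = ⌊a⌋ + 1 := by rw [Int.floor_add_one]
  rw [abs_le]; omega


lemma segment_subset_grid {ε : ℝ} {p q : EuclideanSpace ℝ (Fin d)}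
    (hp : p ∈ latticePts d ε) (hq : q ∈ latticePts d ε) (hpq : dist p q = ε) :
    segment ℝ p q ⊆ gridSet d ε := by
  intro z hz
  simp only [gridSet, Set.mem_iUnion]
  exact ⟨p, hp, q, hq, hpq, hz⟩

lemma lattice_mem_grid (hd1 : 1 ≤ d) {ε : ℝ} (hε : 0 < ε)
    {p : EuclideanSpace ℝ (Fin d)} (hp : p ∈ latticePts d ε) : p ∈ gridSet d ε := by
  set i0 : Fin d := ⟨0, hd1⟩
  set q : EuclideanSpace ℝ (Fin d) := WithLp.toLp 2 (fun i => if i = i0 then p i + ε else p i) with hq_def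
  have hq : q ∈ latticePts d ε := by
    intro i
    obtain ⟨n, hn⟩ := hp i
    by_cases h : i = i0
    · refine ⟨n + 1, ?_⟩
      show (if i = i0 then p i + ε else p i) = _
      rw [if_pos h, hn]; push_cast; ring
    · refine ⟨n, ?_⟩
      show (if i = i0 then p i + ε else p i) = _
      rw [if_neg h, hn]
  have hdist : dist p q = ε := by
    rw [dist_single p q i0 (fun i hi => by
      show p i = (if i = i0 then p i + ε else p i); rw [if_neg hi])]
    show |p i0 - (if i0 = i0 then p i0 + ε else p i0)| = ε
    rw [if_pos rfl]
    have : p i0 - (p i0 + ε) = -ε := by ring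
    rw [this, abs_neg, abs_of_nonneg hε.le]
  exact segment_subset_grid hp hq hdist (left_mem_segment ℝ p q)

/-- Moore-neighbour lattice points can be joined by a connected grid path staying
coordinatewise within `ε`. -/
lemma moore_connect {ε : ℝ} (hε : 0 < ε) (hd1 : 1 ≤ d)
    {p q : EuclideanSpace ℝ (Fin d)}
    (hp : p ∈ latticePts d ε) (hq : q ∈ latticePts d ε)
    (hpq : ∀ i, |p i - q i| ≤ ε) :
    ∃ K : Set (EuclideanSpace ℝ (Fin d)), IsConnected K ∧ K ⊆ gridSet d ε ∧
      p ∈ K ∧ q ∈ K ∧ ∀ z ∈ K, ∀ i, |z i - p i| ≤ ε := by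
  -- intermediate points
  set m : ℕ → EuclideanSpace ℝ (Fin d) :=
    fun k => WithLp.toLp 2 (fun i : Fin d => if (i : ℕ) < k then q i else p i) with hm_def
  have hm_lattice : ∀ k, m k ∈ latticePts d ε := by
    intro k i
    by_cases h : (i : ℕ) < k
    · obtain ⟨n, hn⟩ := hq i; exact ⟨n, by simp [hm_def, h, hn]⟩
    · obtain ⟨n, hn⟩ := hp i; exact ⟨n, by simp [hm_def, h, hn]⟩
  have hm_coord : ∀ k i, |m k i - p i| ≤ ε := by
    intro k i
    by_cases h : (i : ℕ) < k
    · simpa [hm_def, h, abs_sub_comm] using hpq i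
    · simp [hm_def, h, hε.le]
  have key : ∀ k : ℕ, ∃ K : Set (EuclideanSpace ℝ (Fin d)), IsConnected K ∧
      K ⊆ gridSet d ε ∧ p ∈ K ∧ m k ∈ K ∧ ∀ z ∈ K, ∀ i, |z i - p i| ≤ ε := by
    intro k
    induction k with
    | zero =>
      refine ⟨{p}, isConnected_singleton, ?_, rfl, ?_, ?_⟩
      · intro z hz; rw [Set.mem_singleton_iff] at hz; subst hz
        exact lattice_mem_grid hd1 hε hp
      · have : m 0 = p := by ext i; simp [hm_def]
        rw [this]; rfl
      · intro z hz i; rw [Set.mem_singleton_iff] at hz; subst hz; simp [hε.le]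
    | succ k ih =>
      obtain ⟨K, hKconn, hKgrid, hpK, hmK, hKcoord⟩ := ih
      by_cases hkd : k < d
      · set ik : Fin d := ⟨k, hkd⟩
        have hsame : ∀ i : Fin d, i ≠ ik → m (k+1) i = m k i := by
          intro i hi
          have : ((i : ℕ) < k + 1) ↔ ((i : ℕ) < k) := by
            constructor
            · intro h
              rcases Nat.lt_succ_iff_lt_or_eq.1 h with h | h
              · exact h
              · exact absurd (Fin.ext h : i = ik) hi
            · intro h; omega
          show (if (i:ℕ) < k + 1 then q i else p i) = (if (i:ℕ) < k then q i else p i)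
          by_cases h : (i : ℕ) < k
          · rw [if_pos (this.2 h), if_pos h]
          · rw [if_neg (fun hh => h (this.1 hh)), if_neg h]
        by_cases heq : p ik = q ik
        · have : m (k+1) = m k := by
            ext i
            by_cases hi : i = ik
            · have hpq' : p i = q i := by rw [hi]; exact heq
              show (if (i:ℕ) < k + 1 then q i else p i) = (if (i:ℕ) < k then q i else p i)
              by_cases h : (i:ℕ) < k <;> by_cases h' : (i:ℕ) < k+1 <;> simp [h, h', hpq']
            · exact hsame i hi
          exact ⟨K, hKconn, hKgrid, hpK, this ▸ hmK, hKcoord⟩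
        · -- distance ε step
          have hmk1 : m (k+1) ik = q ik := by
            show (if (ik:ℕ) < k + 1 then q ik else p ik) = q ik
            rw [if_pos (Nat.lt_succ_self k)]
          have hmk : m k ik = p ik := by
            show (if (ik:ℕ) < k then q ik else p ik) = p ik
            rw [if_neg (lt_irrefl k)]
          have hd_eq : dist (m k) (m (k+1)) = ε := by
            rw [dist_single _ _ ik (fun i hi => ((hsame i hi).symm))]
            rw [hmk, hmk1]
            -- |p ik - q ik| = ε since lattice multiples, ≤ ε, nonzero
            obtain ⟨a, ha⟩ := hp ik
            obtain ⟨b, hb⟩ := hq ik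
            have h1 : |p ik - q ik| ≤ ε := hpq ik
            have h2 : p ik - q ik = (a - b : ℤ) * ε := by rw [ha, hb]; push_cast; ring
            have h3 : (a : ℝ) ≠ b := by
              intro h; apply heq; rw [ha, hb]
              exact congrArg (· * ε) h
            have h4 : (1 : ℝ) ≤ |(a - b : ℤ)| := by
              have : (a - b : ℤ) ≠ 0 := by
                intro h
                apply h3
                have : (a : ℤ) = b := by omega
                exact_mod_cast congrArg (Int.cast : ℤ → ℝ) this
              have : 1 ≤ |(a - b : ℤ)| := Int.one_le_abs this
              exact_mod_cast this
            have h5 : |p ik - q ik| = |(a - b : ℤ)| * ε := by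
              rw [h2, abs_mul, abs_of_nonneg hε.le, Int.cast_abs]
            nlinarith [abs_nonneg ((a - b : ℤ) : ℝ)]
          set S := segment ℝ (m k) (m (k+1)) with hS_def
          have hSconn : IsConnected S :=
            ⟨⟨m k, left_mem_segment ℝ _ _⟩, (convex_segment _ _).isPreconnected⟩
          have hScoord : ∀ z ∈ S, ∀ i, |z i - p i| ≤ ε := by
            rintro z ⟨α, β, hα, hβ, hαβ, rfl⟩ i
            have hz : (α • m k + β • m (k+1)) i = α * m k i + β * m (k+1) i := rfl
            rw [hz]
            have h1 : |m k i - p i| ≤ ε := hKcoord _ hmK i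
            have h2 : |m (k+1) i - p i| ≤ ε := hm_coord (k+1) i
            have : α * m k i + β * m (k+1) i - p i
                = α * (m k i - p i) + β * (m (k+1) i - p i) := by
              linear_combination (p i) * hαβ
            rw [this]
            calc |α * (m k i - p i) + β * (m (k+1) i - p i)|
                ≤ |α * (m k i - p i)| + |β * (m (k+1) i - p i)| := abs_add_le _ _
              _ = α * |m k i - p i| + β * |m (k+1) i - p i| := by
                  rw [abs_mul, abs_mul, abs_of_nonneg hα, abs_of_nonneg hβ]
              _ ≤ α * ε + β * ε := by
                  apply add_le_add <;> apply mul_le_mul_of_nonneg_left <;> first | exact hα | exact hβ | assumption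
              _ = ε := by linear_combination ε * hαβ
          refine ⟨K ∪ S, ?_, ?_, Or.inl hpK, Or.inr (right_mem_segment ℝ _ _), ?_⟩
          · exact hKconn.union ⟨m k, hmK, left_mem_segment ℝ _ _⟩ hSconn
          · rintro z (hz | hz)
            · exact hKgrid hz
            · exact segment_subset_grid (hm_lattice k) (hm_lattice (k+1)) hd_eq hz
          · rintro z (hz | hz) i
            · exact hKcoord z hz i
            · exact hScoord z hz i
      · have : m (k+1) = m k := by
          ext i
          have hik : (i : ℕ) < k := lt_of_lt_of_le i.isLt (not_lt.1 hkd)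
          show (if (i:ℕ) < k + 1 then q i else p i) = (if (i:ℕ) < k then q i else p i)
          rw [if_pos (Nat.lt_succ_of_lt hik), if_pos hik]
        exact ⟨K, hKconn, hKgrid, hpK, this ▸ hmK, hKcoord⟩
  obtain ⟨K, h1, h2, h3, h4, h5⟩ := key d
  have hmd : m d = q := by
    ext i
    show (if (i:ℕ) < d then q i else p i) = q i
    rw [if_pos i.isLt]
  exact ⟨K, h1, h2, h3, hmd ▸ h4, h5⟩


/-- The open set of points at depth `> δ` inside `Ω`. -/
def Udom (Ω : Set (EuclideanSpace ℝ (Fin d))) (δ : ℝ) : Set (EuclideanSpace ℝ (Fin d)) :=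
  {x | δ < infDist x Ωᶜ}

lemma Udom_open (Ω : Set (EuclideanSpace ℝ (Fin d))) (δ : ℝ) : IsOpen (Udom Ω δ) :=
  isOpen_lt continuous_const (continuous_infDist_pt _)

lemma Udom_ball_subset {Ω : Set (EuclideanSpace ℝ (Fin d))} {δ : ℝ} (hδ : 0 ≤ δ)
    {x : EuclideanSpace ℝ (Fin d)} (hx : x ∈ Udom Ω δ) {z : EuclideanSpace ℝ (Fin d)}
    (hz : dist z x ≤ δ) : z ∈ Ω := by
  by_contra hzc
  have h1 : infDist x Ωᶜ ≤ dist x z := infDist_le_dist_of_mem hzc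
  rw [dist_comm] at h1
  exact absurd hx (by simp only [Udom, Set.mem_setOf_eq]; push_neg; linarith)

lemma Udom_subset {Ω : Set (EuclideanSpace ℝ (Fin d))} {δ : ℝ} (hδ : 0 ≤ δ) :
    Udom Ω δ ⊆ Ω := fun x hx => Udom_ball_subset hδ hx (by simpa using hδ)

lemma Udom_anti {Ω : Set (EuclideanSpace ℝ (Fin d))} {δ δ' : ℝ} (h : δ' ≤ δ) :
    Udom Ω δ ⊆ Udom Ω δ' := fun x hx => lt_of_le_of_lt h hx

/-- The key connectivity lemma: the rounding of any point of the connected component of `0`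
in `Udom Ω δ` belongs to the discrete domain, provided `2dε < δ`. -/
lemma roundPt_mem_discDomain {Ω : Set (EuclideanSpace ℝ (Fin d))} (hΩo : IsOpen Ω)
    (hd1 : 1 ≤ d) {ε δ : ℝ} (hε : 0 < ε) (hδε : 2 * d * ε < δ)
    {y : EuclideanSpace ℝ (Fin d)}
    (hy : y ∈ connectedComponentIn (Udom Ω δ) 0) :
    roundPt ε y ∈ discDomain Ω ε := by
  have hδ : 0 < δ := lt_of_le_of_lt (by positivity) hδε
  have h0U : (0 : EuclideanSpace ℝ (Fin d)) ∈ Udom Ω δ := by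
    by_contra h
    rw [← connectedComponentIn_nonempty_iff (F := Udom Ω δ)
      (x := (0 : EuclideanSpace ℝ (Fin d)))] at h
    · exact h ⟨y, hy⟩
  -- 0 is in the grid and in Ω
  have h0lattice : (0 : EuclideanSpace ℝ (Fin d)) ∈ latticePts d ε :=
    fun i => ⟨0, by simp⟩
  have h0grid : (0 : EuclideanSpace ℝ (Fin d)) ∈ Ω ∩ gridSet d ε :=
    ⟨Udom_subset hδ.le h0U, lattice_mem_grid hd1 hε h0lattice⟩
  -- get a path from 0 to y inside the component
  have hVopen : IsOpen (connectedComponentIn (Udom Ω δ) 0) :=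
    (Udom_open Ω δ).connectedComponentIn
  have hVconn : IsConnected (connectedComponentIn (Udom Ω δ) 0) :=
    isConnected_connectedComponentIn_iff.2 h0U
  have hVpath : IsPathConnected (connectedComponentIn (Udom Ω δ) 0) :=
    (hVopen.isConnected_iff_isPathConnected).1 hVconn
  have h0V : (0 : EuclideanSpace ℝ (Fin d)) ∈ connectedComponentIn (Udom Ω δ) 0 :=
    mem_connectedComponentIn h0U
  obtain ⟨γ, hγ⟩ := hVpath.joinedIn 0 h0V y hy
  -- uniform continuity of γ
  have hγu : UniformContinuous γ :=
    CompactSpace.uniformContinuous_of_continuous γ.continuous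
  rw [Metric.uniformContinuous_iff] at hγu
  obtain ⟨η, hη, hγη⟩ := hγu ε hε
  obtain ⟨n, hn⟩ := exists_nat_gt (1 / η)
  have hn1 : (1 : ℝ) / (n + 1) < η := by
    have hnpos : (0:ℝ) < n + 1 := by positivity
    have h2 : 1 < η * (↑n + 1) := by
      have := (div_lt_iff₀ hη).1 hn; nlinarith
    exact (div_lt_iff₀ hnpos).2 h2
  -- the subdivision points
  set t : ℕ → unitInterval := fun k =>
    ⟨min ((k : ℝ) / (n + 1)) 1, le_min (by positivity) zero_le_one, min_le_right _ _⟩ with ht_def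
  have ht0 : t 0 = 0 := by
    apply Subtype.ext; simp [ht_def]
  have htlast : t (n + 1) = 1 := by
    apply Subtype.ext
    simp only [ht_def]
    have : ((n:ℝ) + 1) / ((n:ℝ) + 1) = 1 := div_self (by positivity)
    show min (((n+1 : ℕ) : ℝ) / ((n:ℝ) + 1)) 1 = (1:ℝ)
    push_cast
    rw [this, min_self]
  have htdist : ∀ k, dist (t k) (t (k + 1)) < η := by
    intro k
    rw [Subtype.dist_eq]
    show |min ((k:ℝ)/(n+1)) 1 - min (((k+1:ℕ):ℝ)/(n+1)) 1| < η
    have h1 : |min ((k:ℝ)/(n+1)) 1 - min (((k+1:ℕ):ℝ)/(n+1)) 1| ≤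
        max |(k:ℝ)/(n+1) - ((k+1:ℕ):ℝ)/(n+1)| |(1:ℝ) - 1| :=
      abs_min_sub_min_le_max _ _ _ _
    have h2 : |(k:ℝ)/(n+1) - ((k+1:ℕ):ℝ)/(n+1)| = 1 / (n+1) := by
      push_cast
      rw [div_sub_div_same]
      have : (k:ℝ) - ((k:ℝ) + 1) = -1 := by ring
      rw [this]
      rw [abs_div, abs_neg, abs_one, abs_of_pos (by positivity : (0:ℝ) < (n:ℝ)+1)]
    have h3 : |(1:ℝ) - 1| = 0 := by simp
    rw [h2, h3] at h1
    have h4 : max (1/((n:ℝ)+1)) 0 = 1/((n:ℝ)+1) := max_eq_left (by positivity)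
    rw [h4] at h1
    linarith
  -- the lattice approximations along the path
  set p : ℕ → EuclideanSpace ℝ (Fin d) := fun k => roundPt ε (γ (t k)) with hp_def
  have hp_lattice : ∀ k, p k ∈ latticePts d ε := fun k => roundPt_mem_lattice ε _
  have hp0 : p 0 = 0 := by
    rw [hp_def]
    simp only [ht0]
    rw [γ.source]
    exact roundPt_lattice_fix hε h0lattice
  have hplast : p (n + 1) = roundPt ε y := by
    rw [hp_def]; simp only [htlast]; rw [γ.target]
  have hp_coord : ∀ k i, |p k i - p (k+1) i| ≤ ε := by
    intro k i
    have hdist : dist (γ (t k)) (γ (t (k+1))) < ε := hγη (htdist k)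
    have hcoord : |(γ (t k) : EuclideanSpace ℝ (Fin d)) i - γ (t (k+1)) i| < ε :=
      lt_of_le_of_lt (coord_le_dist _ _ i) hdist
    have hfl : |⌊(γ (t k) : EuclideanSpace ℝ (Fin d)) i / ε⌋ -
        ⌊(γ (t (k+1)) : EuclideanSpace ℝ (Fin d)) i / ε⌋| ≤ 1 := by
      apply floor_diff_le_one
      rw [div_sub_div_same, abs_div, abs_of_pos hε, div_lt_one hε]
      exact hcoord
    show |(⌊(γ (t k) : EuclideanSpace ℝ (Fin d)) i / ε⌋ : ℝ) * ε -
        (⌊(γ (t (k+1)) : EuclideanSpace ℝ (Fin d)) i / ε⌋ : ℝ) * ε| ≤ ε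
    rw [← sub_mul, abs_mul, abs_of_pos hε]
    have : |(⌊(γ (t k) : EuclideanSpace ℝ (Fin d)) i / ε⌋ : ℝ) -
        (⌊(γ (t (k+1)) : EuclideanSpace ℝ (Fin d)) i / ε⌋ : ℝ)| ≤ 1 := by
      exact_mod_cast hfl
    nlinarith [abs_nonneg ((⌊(γ (t k) : EuclideanSpace ℝ (Fin d)) i / ε⌋ : ℝ) -
        (⌊(γ (t (k+1)) : EuclideanSpace ℝ (Fin d)) i / ε⌋ : ℝ))]
  -- p k is close to γ (t k)
  have hp_near : ∀ k, dist (p k) (γ (t k)) ≤ d * ε := fun k => roundPt_dist_le hε _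
  -- induction: each p k lies in the connected component of 0 in Ω ∩ grid
  have hmain : ∀ k, p k ∈ connectedComponentIn (Ω ∩ gridSet d ε) 0 := by
    intro k
    induction k with
    | zero => rw [hp0]; exact mem_connectedComponentIn h0grid
    | succ k ih =>
      obtain ⟨K, hKconn, hKgrid, hpK, hqK, hKcoord⟩ :=
        moore_connect hε hd1 (hp_lattice k) (hp_lattice (k+1)) (hp_coord k)
      have hKΩ : K ⊆ Ω := by
        intro z hz
        have h1 : dist z (p k) ≤ d * ε :=
          dist_le_of_coords _ _ hε.le (fun i => hKcoord z hz i)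
        have h2 : dist z (γ (t k)) ≤ 2 * d * ε := by
          calc dist z (γ (t k)) ≤ dist z (p k) + dist (p k) (γ (t k)) := dist_triangle _ _ _
            _ ≤ d * ε + d * ε := add_le_add h1 (hp_near k)
            _ = 2 * d * ε := by ring
        have h3 : (γ (t k) : EuclideanSpace ℝ (Fin d)) ∈ Udom Ω δ :=
          connectedComponentIn_subset _ _ (hγ (t k))
        exact Udom_ball_subset hδ.le h3 (le_trans h2 hδε.le)
      have hA : IsConnected (connectedComponentIn (Ω ∩ gridSet d ε) 0 ∪ K) := by
        apply IsConnected.union ⟨p k, ih, hpK⟩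
          (isConnected_connectedComponentIn_iff.2 h0grid) hKconn
      have hAsub : (connectedComponentIn (Ω ∩ gridSet d ε) 0 ∪ K) ⊆ Ω ∩ gridSet d ε := by
        rintro z (hz | hz)
        · exact connectedComponentIn_subset _ _ hz
        · exact ⟨hKΩ hz, hKgrid hz⟩
      have h0A : (0 : EuclideanSpace ℝ (Fin d)) ∈
          connectedComponentIn (Ω ∩ gridSet d ε) 0 ∪ K :=
        Or.inl (mem_connectedComponentIn h0grid)
      have := hA.isPreconnected.subset_connectedComponentIn h0A hAsub
      exact this (Or.inr hqK)
  have := hmain (n + 1)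
  rw [hplast] at this
  exact ⟨this, roundPt_mem_lattice ε y⟩


/-- A graph over the hyperplane `x_j = 0` in the pi space is Lebesgue-null. -/
lemma pi_graph_null (j : Fin d) (c : (Fin d → ℝ) → ℝ) (hc : Continuous c)
    (hdep : ∀ v w : Fin d → ℝ, (∀ i, i ≠ j → v i = w i) → c v = c w) :
    volume {v : Fin d → ℝ | v j = c v} = 0 := by
  set Gpi := {v : Fin d → ℝ | v j = c v} with hG_def
  have hGmeas : MeasurableSet Gpi := by
    have : IsClosed Gpi := isClosed_eq (continuous_apply j) hc
    exact this.measurableSet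
  set p : Fin d → Prop := fun i => ¬ (i = j) with hp_def
  set e2 := MeasurableEquiv.piEquivPiSubtypeProd (fun _ : Fin d => ℝ) p with he2_def
  have hmp := MeasureTheory.volume_preserving_piEquivPiSubtypeProd (fun _ : Fin d => ℝ) p
  set B := e2.symm ⁻¹' Gpi with hB_def
  have hBmeas : MeasurableSet B := e2.symm.measurable hGmeas
  have hpre : e2 ⁻¹' B = Gpi := by
    ext v; simp [hB_def]
  have h1 : volume Gpi = volume B := by
    rw [← hpre]
    exact hmp.measure_preimage hBmeas.nullMeasurableSet
  rw [h1]
  -- Now B lives in a product; use Fubini for null sets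
  haveI : Unique {i : Fin d // ¬ p i} :=
    ⟨⟨⟨j, not_not_intro rfl⟩⟩, fun x => Subtype.ext (not_not.1 x.2)⟩
  rw [show (volume : Measure (({i : Fin d // p i} → ℝ) × ({i : Fin d // ¬ p i} → ℝ)))
      = (volume : Measure ({i : Fin d // p i} → ℝ)).prod volume from rfl]
  rw [MeasureTheory.Measure.measure_prod_null hBmeas]
  refine Filter.Eventually.of_forall (fun a => ?_)
  show volume (Prod.mk a ⁻¹' B) = 0
  set jj : {i : Fin d // ¬ p i} := ⟨j, not_not_intro rfl⟩ with hjj_def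
  have hslice : Prod.mk a ⁻¹' B =
      Set.pi Set.univ (fun _ : {i : Fin d // ¬ p i} => ({c (e2.symm (a, fun _ => 0))} : Set ℝ)) := by
    ext b
    simp only [hB_def, Set.mem_preimage, hG_def, Set.mem_setOf_eq, Set.mem_pi,
      Set.mem_univ, forall_true_left, Set.mem_singleton_iff]
    have happ : ∀ b' : {i : Fin d // ¬ p i} → ℝ,
        (e2.symm (a, b')) j = b' jj := by
      intro b'
      rw [MeasurableEquiv.piEquivPiSubtypeProd_symm_apply]
      simp [hp_def, hjj_def]
    have hcc : c (e2.symm (a, b)) = c (e2.symm (a, fun _ => 0)) := by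
      apply hdep
      intro i hi
      rw [MeasurableEquiv.piEquivPiSubtypeProd_symm_apply]
      have hpi : p i := hi
      simp only [dif_pos hpi]
    have huniq : ∀ i : {i : Fin d // ¬ p i}, i = jj :=
      fun i => Subtype.ext (not_not.1 i.2)
    rw [happ b, hcc]
    constructor
    · intro h i
      rw [huniq i]
      exact h
    · intro h
      exact h jj
  rw [hslice, volume_pi_pi]
  exact Finset.prod_eq_zero (Finset.mem_univ jj) Real.volume_singleton

/-- The same for a graph in Euclidean space. -/
lemma euclidean_graph_null (j : Fin d) (g : (Fin d → ℝ) → ℝ) {L : NNReal}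
    (hg : LipschitzWith L g) :
    volume {w : EuclideanSpace ℝ (Fin d) | g (fun i => if i = j then 0 else w i) = w j} = 0 := by
  set c : (Fin d → ℝ) → ℝ := fun v => g (fun i => if i = j then 0 else v i) with hc_def
  have hc : Continuous c := by
    apply hg.continuous.comp
    apply continuous_pi
    intro i
    by_cases h : i = j
    · simp [h]; exact continuous_const
    · simp [h]; exact continuous_apply i
  have hdep : ∀ v w : Fin d → ℝ, (∀ i, i ≠ j → v i = w i) → c v = c w := by
    intro v w h
    simp only [hc_def]
    congr 1
    funext i
    by_cases hi : i = j
    · simp [hi]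
    · simp [hi, h i hi]
  have hnull := pi_graph_null j c hc hdep
  have hpre : {w : EuclideanSpace ℝ (Fin d) | g (fun i => if i = j then 0 else w i) = w j}
      = (MeasurableEquiv.toLp 2 (Fin d → ℝ)).symm ⁻¹' {v : Fin d → ℝ | v j = c v} := by
    ext w
    simp only [Set.mem_preimage, Set.mem_setOf_eq, hc_def]
    constructor
    · intro h; exact h.symm
    · intro h; exact h.symm
  rw [hpre]
  rw [(EuclideanSpace.volume_preserving_symm_measurableEquiv_toLp (Fin d)).measure_preimage ?_]
  · exact hnull
  · have : IsClosed {v : Fin d → ℝ | v j = c v} := isClosed_eq (continuous_apply j) hc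
    exact this.measurableSet.nullMeasurableSet

/-- Isometries of Euclidean space preserve volume. -/
lemma isometry_measure_preimage (φ : EuclideanSpace ℝ (Fin d) ≃ᵢ EuclideanSpace ℝ (Fin d))
    (A : Set (EuclideanSpace ℝ (Fin d))) (hA : MeasurableSet A) :
    volume (⇑φ ⁻¹' A) = volume A := by
  set L := φ.toRealLinearIsometryEquiv with hL_def
  have hφ : ∀ x, φ x = L x + φ 0 := by
    intro x
    rw [hL_def, IsometryEquiv.toRealLinearIsometryEquiv_apply]
    abel
  have hmp : MeasurePreserving (fun x : EuclideanSpace ℝ (Fin d) => L x + φ 0)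
      volume volume :=
    (measurePreserving_add_right volume (φ 0)).comp L.measurePreserving
  have : ⇑φ = fun x => L x + φ 0 := funext hφ
  rw [this]
  exact hmp.measure_preimage hA.nullMeasurableSet

/-- The frontier of a Lipschitz domain is Lebesgue-null. -/
lemma frontier_null {Ω : Set (EuclideanSpace ℝ (Fin d))} (hΩ : IsLipschitzDomain d Ω) :
    volume (frontier Ω) = 0 := by
  obtain ⟨hΩo, -, -, hlip⟩ := hΩ
  apply measure_null_of_locally_null
  intro x hx
  obtain ⟨U, hU, φ, j, L, g, hg, hiff⟩ := hlip x hx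
  obtain ⟨O, hOU, hOopen, hxO⟩ := _root_.mem_nhds_iff.1 hU
  refine ⟨O ∩ frontier Ω, Filter.inter_mem (mem_nhdsWithin_of_mem_nhds (hOopen.mem_nhds hxO)) self_mem_nhdsWithin, ?_⟩
  set G := {w : EuclideanSpace ℝ (Fin d) | g (fun i => if i = j then 0 else w i) = w j}
    with hG_def
  have hGclosed : IsClosed G := by
    apply isClosed_eq
    · apply hg.continuous.comp
      apply continuous_pi
      intro i
      by_cases h : i = j
      · simp [h]; exact continuous_const
      · simp [h]; exact PiLp.continuous_apply 2 _ i
    · exact PiLp.continuous_apply 2 _ j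
  have hsub : O ∩ frontier Ω ⊆ ⇑φ ⁻¹' G := by
    rintro z ⟨hzO, hzf⟩
    have hzU : z ∈ U := hOU hzO
    have hziff := hiff z hzU
    have hznΩ : z ∉ Ω := by
      intro h
      exact (disjoint_interior_frontier (s := Ω)).ne_of_mem (by rwa [hΩo.interior_eq]) hzf rfl
    -- continuous function h
    set hfun : EuclideanSpace ℝ (Fin d) → ℝ :=
      fun w => g (fun i => if i = j then 0 else φ w i) - φ w j with hfun_def
    have hhc : Continuous hfun := by
      apply Continuous.sub
      · apply hg.continuous.comp
        apply continuous_pi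
        intro i
        by_cases h : i = j
        · simp [h]; exact continuous_const
        · simp only [h, if_false]
          exact (PiLp.continuous_apply 2 _ i).comp φ.continuous
      · exact (PiLp.continuous_apply 2 _ j).comp φ.continuous
    have hnlt : ¬ (hfun z < 0) := by
      intro h
      apply hznΩ
      rw [hziff]
      simp only [hfun_def] at h
      linarith
    have hngt : ¬ (0 < hfun z) := by
      intro h
      -- a neighborhood of z misses Ω, contradicting z ∈ frontier Ω ⊆ closure Ω
      have hW : IsOpen (O ∩ hfun ⁻¹' (Set.Ioi 0)) :=
        hOopen.inter (isOpen_Ioi.preimage hhc)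
      have hzW : z ∈ O ∩ hfun ⁻¹' (Set.Ioi 0) := ⟨hzO, h⟩
      have hWdisj : (O ∩ hfun ⁻¹' (Set.Ioi 0)) ∩ Ω = ∅ := by
        ext w
        simp only [Set.mem_inter_iff, Set.mem_empty_iff_false, iff_false, not_and]
        rintro ⟨hwO, hw⟩ hwΩ
        have := (hiff w (hOU hwO)).1 hwΩ
        simp only [Set.mem_preimage, Set.mem_Ioi, hfun_def] at hw
        linarith
      have hzcl : z ∈ closure Ω := hzf.1
      rw [_root_.mem_closure_iff] at hzcl
      obtain ⟨w, hw1, hw2⟩ := hzcl _ hW hzW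
      rw [Set.eq_empty_iff_forall_notMem] at hWdisj
      exact hWdisj w ⟨hw1, hw2⟩
    have : hfun z = 0 := le_antisymm (not_lt.1 hngt) (not_lt.1 hnlt)
    simp only [Set.mem_preimage, hG_def, Set.mem_setOf_eq]
    simp only [hfun_def] at this
    linarith
  have hGnull : volume G = 0 := euclidean_graph_null j g hg
  have : volume (⇑φ ⁻¹' G) = 0 := by
    rw [isometry_measure_preimage φ G hGclosed.measurableSet]
    exact hGnull
  exact measure_mono_null hsub this


/-- The half-open cube based at `x`. -/
def cube (ε : ℝ) (x : EuclideanSpace ℝ (Fin d)) : Set (EuclideanSpace ℝ (Fin d)) :=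
  {y | ∀ i, y i ∈ Set.Ico (x i) (x i + ε)}

lemma cube_eq_preimage (ε : ℝ) (x : EuclideanSpace ℝ (Fin d)) :
    cube ε x = (MeasurableEquiv.toLp 2 (Fin d → ℝ)).symm ⁻¹'
      (Set.pi Set.univ (fun i => Set.Ico (x i) (x i + ε))) := by
  ext y
  simp only [cube, Set.mem_preimage, Set.mem_pi, Set.mem_univ, forall_true_left,
    Set.mem_setOf_eq]
  rfl

lemma cube_measurableSet (ε : ℝ) (x : EuclideanSpace ℝ (Fin d)) :
    MeasurableSet (cube ε x) := by
  rw [cube_eq_preimage]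
  exact (MeasurableEquiv.toLp 2 (Fin d → ℝ)).symm.measurable
    (MeasurableSet.univ_pi (fun i => measurableSet_Ico))

lemma cube_volume {ε : ℝ} (hε : 0 < ε) (x : EuclideanSpace ℝ (Fin d)) :
    volume (cube ε x) = ENNReal.ofReal (ε ^ d) := by
  rw [cube_eq_preimage]
  rw [(EuclideanSpace.volume_preserving_symm_measurableEquiv_toLp (Fin d)).measure_preimage
    (MeasurableSet.univ_pi (fun i => measurableSet_Ico)).nullMeasurableSet]
  rw [volume_pi_pi]
  have : ∀ i : Fin d, volume (Set.Ico (x i) (x i + ε)) = ENNReal.ofReal ε := by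
    intro i; rw [Real.volume_Ico]; congr 1; ring
  simp only [this, Finset.prod_const, Finset.card_univ, Fintype.card_fin]
  rw [← ENNReal.ofReal_pow hε.le]

lemma cube_disjoint {ε : ℝ} (hε : 0 < ε) {x x' : EuclideanSpace ℝ (Fin d)}
    (hx : x ∈ latticePts d ε) (hx' : x' ∈ latticePts d ε) (hne : x ≠ x') :
    Disjoint (cube ε x) (cube ε x') := by
  rw [Set.disjoint_left]
  rintro z hz hz'
  apply hne
  ext i
  obtain ⟨n, hn⟩ := hx i
  obtain ⟨m, hm⟩ := hx' i
  have h1 := hz i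
  have h2 := hz' i
  simp only [Set.mem_Ico] at h1 h2
  rw [hn, hm] at *
  have : n = m := by
    by_contra hne'
    rcases lt_or_gt_of_ne hne' with h | h
    · have : (n : ℝ) + 1 ≤ m := by exact_mod_cast Int.add_one_le_iff.2 h
      nlinarith [h1.2, h2.1]
    · have : (m : ℝ) + 1 ≤ n := by exact_mod_cast Int.add_one_le_iff.2 h
      nlinarith [h2.2, h1.1]
  rw [this]

/-- Lattice points in a bounded set form a finite set. -/
lemma lattice_finite {ε : ℝ} (hε : 0 < ε) {s : Set (EuclideanSpace ℝ (Fin d))}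
    (hs : Bornology.IsBounded s) : (latticePts d ε ∩ s).Finite := by
  obtain ⟨R, hR⟩ := hs.subset_closedBall 0
  set N : ℤ := ⌈R / ε⌉ with hN_def
  have key : (latticePts d ε ∩ s) ⊆
      (fun n : Fin d → ℤ => (WithLp.toLp 2 (fun i => (n i : ℝ) * ε) : EuclideanSpace ℝ (Fin d))) ''
        (Set.pi Set.univ (fun _ : Fin d => Set.Icc (-N) N)) := by
    rintro x ⟨hx, hxs⟩
    have hxR : dist x 0 ≤ R := by
      have := hR hxs
      rwa [Metric.mem_closedBall] at this
    refine ⟨fun i => Classical.choose (hx i), ?_, ?_⟩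
    · intro i _
      have hxi := Classical.choose_spec (hx i)
      set n := Classical.choose (hx i)
      have hcoord : |x i| ≤ R := by
        have h0 : (0 : EuclideanSpace ℝ (Fin d)) i = 0 := rfl
        have := coord_le_dist x 0 i
        rw [h0, sub_zero] at this
        linarith
      rw [hxi] at hcoord
      rw [abs_mul, abs_of_pos hε] at hcoord
      have hn : |(n : ℝ)| ≤ R / ε := by
        rw [le_div_iff₀ hε]; linarith
      have hN : R / ε ≤ (N : ℝ) := Int.le_ceil _
      have : |(n : ℝ)| ≤ (N : ℝ) := le_trans hn hN
      have : |n| ≤ N := by exact_mod_cast this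
      rw [abs_le] at this
      exact ⟨this.1, this.2⟩
    · ext i
      exact (Classical.choose_spec (hx i)).symm
  exact Set.Finite.subset (Set.Finite.image _ (Set.Finite.pi (fun _ => Set.finite_Icc _ _))) key


lemma mem_cube_dist_le {ε : ℝ} (hε : 0 < ε) {x z : EuclideanSpace ℝ (Fin d)}
    (hz : z ∈ cube ε x) : dist z x ≤ d * ε := by
  apply dist_le_of_coords _ _ hε.le
  intro i
  have := hz i
  simp only [Set.mem_Ico] at this
  rw [abs_le]
  constructor <;> nlinarith [this.1, this.2]

lemma zero_mem_discDomain {Ω : Set (EuclideanSpace ℝ (Fin d))} (hd1 : 1 ≤ d)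
    {ε : ℝ} (hε : 0 < ε) (h0 : (0 : EuclideanSpace ℝ (Fin d)) ∈ Ω) :
    (0 : EuclideanSpace ℝ (Fin d)) ∈ discDomain Ω ε := by
  have h0l : (0 : EuclideanSpace ℝ (Fin d)) ∈ latticePts d ε := fun i => ⟨0, by simp⟩
  exact ⟨mem_connectedComponentIn ⟨h0, lattice_mem_grid hd1 hε h0l⟩, h0l⟩

lemma discDomain_subset {Ω : Set (EuclideanSpace ℝ (Fin d))} {ε : ℝ} :
    discDomain Ω ε ⊆ latticePts d ε ∩ Ω := by
  rintro x ⟨hx1, hx2⟩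
  exact ⟨hx2, (connectedComponentIn_subset _ _ hx1).1⟩

lemma discDomain_finite {Ω : Set (EuclideanSpace ℝ (Fin d))} {ε : ℝ} (hε : 0 < ε)
    (hΩbdd : Bornology.IsBounded Ω) : (discDomain Ω ε).Finite :=
  (lattice_finite hε hΩbdd).subset discDomain_subset

/-- Crossing the frontier along a segment. -/
lemma frontier_cross {Ω : Set (EuclideanSpace ℝ (Fin d))} (hΩo : IsOpen Ω)
    {x z : EuclideanSpace ℝ (Fin d)} (hx : x ∈ Ω) (hz : z ∉ Ω) :
    ∃ w ∈ frontier Ω, dist z w ≤ dist z x := by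
  by_cases hfr : (segment ℝ x z ∩ frontier Ω).Nonempty
  · obtain ⟨w, hw1, hw2⟩ := hfr
    refine ⟨w, hw2, ?_⟩
    obtain ⟨α, β, hα, hβ, hαβ, rfl⟩ := hw1
    have : z - (α • x + β • z) = α • (z - x) := by
      rw [smul_sub]
      have : z = α • z + β • z := by rw [← add_smul, hαβ, one_smul]
      nth_rewrite 1 [this]
      abel
    rw [dist_eq_norm, this, norm_smul, Real.norm_eq_abs, abs_of_nonneg hα,
      ← dist_eq_norm]
    nlinarith [dist_nonneg (x := z) (y := x), dist_nonneg (x := z) (y := α • x + β • z)]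
  · exfalso
    rw [Set.not_nonempty_iff_eq_empty] at hfr
    have hpre : IsPreconnected (segment ℝ x z) := (convex_segment x z).isPreconnected
    have hsub : segment ℝ x z ⊆ Ω ∪ (closure Ω)ᶜ := by
      intro w hw
      by_cases hwΩ : w ∈ Ω
      · exact Or.inl hwΩ
      · right
        intro hwcl
        have : w ∈ frontier Ω := ⟨hwcl, by rwa [hΩo.interior_eq]⟩
        rw [Set.eq_empty_iff_forall_notMem] at hfr
        exact hfr w ⟨hw, this⟩
    have h1 : (segment ℝ x z ∩ Ω).Nonempty := ⟨x, left_mem_segment ℝ x z, hx⟩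
    have h2 : (segment ℝ x z ∩ (closure Ω)ᶜ).Nonempty := by
      refine ⟨z, right_mem_segment ℝ x z, ?_⟩
      intro hzcl
      have : z ∈ frontier Ω := ⟨hzcl, by rwa [hΩo.interior_eq]⟩
      rw [Set.eq_empty_iff_forall_notMem] at hfr
      exact hfr z ⟨right_mem_segment ℝ x z, this⟩
    obtain ⟨w, hw1, hw2, hw3⟩ :=
      hpre Ω (closure Ω)ᶜ hΩo (isClosed_closure.isOpen_compl) hsub h1 h2
    exact hw3 (subset_closure hw2)

/-- Interior exhaustion: `Ω` is the increasing union of the `W n`. -/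
lemma Udom_exhaustion {Ω : Set (EuclideanSpace ℝ (Fin d))} (hΩo : IsOpen Ω)
    (hΩconn : IsConnected Ω) (hΩne : Ωᶜ.Nonempty)
    (h0 : (0 : EuclideanSpace ℝ (Fin d)) ∈ Ω) :
    (⋃ n : ℕ, connectedComponentIn (Udom Ω (1 / (n + 1))) 0) = Ω := by
  apply Set.Subset.antisymm
  · apply Set.iUnion_subset
    intro n
    exact (connectedComponentIn_subset _ _).trans (Udom_subset (by positivity))
  · intro x hx
    have hpath : IsPathConnected Ω := (hΩo.isConnected_iff_isPathConnected).1 hΩconn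
    obtain ⟨γ, hγ⟩ := hpath.joinedIn 0 h0 x hx
    have hcont : Continuous fun t : unitInterval => infDist (γ t) Ωᶜ :=
      (continuous_infDist_pt _).comp γ.continuous
    obtain ⟨t0, -, ht0⟩ := isCompact_univ.exists_isMinOn
      (Set.univ_nonempty) hcont.continuousOn
    have hc : 0 < infDist (γ t0) Ωᶜ :=
      (hΩo.isClosed_compl.notMem_iff_infDist_pos hΩne).1 (Set.notMem_compl_iff.2 (hγ t0))
    obtain ⟨m, hm⟩ := exists_nat_one_div_lt hc
    apply Set.mem_iUnion.2 ⟨m, ?_⟩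
    have hrange : Set.range γ ⊆ Udom Ω (1 / (m + 1)) := by
      rintro w ⟨t, rfl⟩
      have := ht0 (Set.mem_univ t)
      show 1 / ((m : ℝ) + 1) < infDist (γ t) Ωᶜ
      calc (1:ℝ) / (m + 1) < infDist (γ t0) Ωᶜ := hm
        _ ≤ infDist (γ t) Ωᶜ := this
    have h0range : (0 : EuclideanSpace ℝ (Fin d)) ∈ Set.range γ := ⟨0, γ.source⟩
    have := (isConnected_range γ.continuous).isPreconnected.subset_connectedComponentIn
      h0range hrange
    exact this ⟨1, γ.target⟩



lemma integrableOn_of_bounded {f : EuclideanSpace ℝ (Fin d) → ℝ} (hf : Continuous f)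
    {M : ℝ} (hM : ∀ x, |f x| ≤ M) {s : Set (EuclideanSpace ℝ (Fin d))}
    (hs : volume s < ⊤) : IntegrableOn f s volume := by
  refine Integrable.mono' (g := fun _ => M) (integrableOn_const hs.ne)
    hf.aestronglyMeasurable.restrict (ae_of_all _ (fun x => ?_))
  rw [Real.norm_eq_abs]; exact hM x

lemma count_bound {Ω : Set (EuclideanSpace ℝ (Fin d))} (hΩbdd : Bornology.IsBounded Ω) :
    ∃ C₀ : ℝ, 0 ≤ C₀ ∧ ∀ ε ∈ Set.Ioo (0:ℝ) 1,
      ε ^ d * (((latticePts d ε ∩ Ω)).ncard : ℝ) ≤ C₀ := by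
  obtain ⟨R, hR⟩ := hΩbdd.subset_closedBall 0
  set R' := max R 0 with hR'_def
  have hR'' : Ω ⊆ Metric.closedBall 0 R' :=
    hR.trans (Metric.closedBall_subset_closedBall (le_max_left _ _))
  refine ⟨(volume (Metric.closedBall (0 : EuclideanSpace ℝ (Fin d)) (R' + d + 1))).toReal,
    ENNReal.toReal_nonneg, ?_⟩
  rintro ε ⟨hε0, hε1⟩
  have hP := lattice_finite hε0 hΩbdd
  set Pf := hP.toFinset with hPf_def
  have hPmem : ∀ x ∈ Pf, x ∈ latticePts d ε ∩ Ω := fun x hx => hP.mem_toFinset.1 hx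
  have hpair : (↑Pf : Set (EuclideanSpace ℝ (Fin d))).Pairwise (Function.onFun Disjoint (cube ε)) :=
    fun x hx y hy hne =>
      cube_disjoint hε0 (hPmem x (Finset.mem_coe.1 hx)).1 (hPmem y (Finset.mem_coe.1 hy)).1 hne
  have hcubemeas : ∀ x ∈ Pf, MeasurableSet (cube ε x) := fun x _ => cube_measurableSet _ _
  have hμT : volume (⋃ x ∈ Pf, cube ε x) = (Pf.card : ℝ≥0∞) * ENNReal.ofReal (ε ^ d) := by
    rw [measure_biUnion_finset hpair hcubemeas]
    simp only [cube_volume hε0, Finset.sum_const, nsmul_eq_mul]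
  have hTsub : (⋃ x ∈ Pf, cube ε x) ⊆
      Metric.closedBall (0 : EuclideanSpace ℝ (Fin d)) (R' + d + 1) := by
    intro z hz
    obtain ⟨x, hxPf, hzx⟩ := Set.mem_iUnion₂.1 hz
    have hxΩ : x ∈ Ω := (hPmem x hxPf).2
    have h1 : dist x 0 ≤ R' := by
      have := hR'' hxΩ; rwa [Metric.mem_closedBall] at this
    have h2 : dist z x ≤ d * ε := mem_cube_dist_le hε0 hzx
    rw [Metric.mem_closedBall]
    calc dist z 0 ≤ dist z x + dist x 0 := dist_triangle _ _ _
      _ ≤ d * ε + R' := add_le_add h2 h1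
      _ ≤ R' + d + 1 := by nlinarith [hε1.le, Nat.cast_nonneg (α := ℝ) d]
  have hball_lt : volume (Metric.closedBall (0 : EuclideanSpace ℝ (Fin d)) (R' + d + 1)) < ⊤ :=
    Metric.isBounded_closedBall.measure_lt_top
  have hle : volume (⋃ x ∈ Pf, cube ε x) ≤
      volume (Metric.closedBall (0 : EuclideanSpace ℝ (Fin d)) (R' + d + 1)) :=
    measure_mono hTsub
  rw [hμT] at hle
  have h2 : ((Pf.card : ℝ≥0∞) * ENNReal.ofReal (ε ^ d)).toReal = Pf.card * ε ^ d := by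
    rw [ENNReal.toReal_mul, ENNReal.toReal_natCast, ENNReal.toReal_ofReal (by positivity)]
  have h3 := ENNReal.toReal_mono hball_lt.ne hle
  rw [h2] at h3
  have h4 : (latticePts d ε ∩ Ω).ncard = Pf.card := Set.ncard_eq_toFinset_card _ hP
  rw [h4]
  calc ε ^ d * (Pf.card : ℝ) = (Pf.card : ℝ) * ε ^ d := mul_comm _ _
    _ ≤ _ := h3

end DVM

open DVM

/-- For every uniformly bounded, uniformly equicontinuous family `F` of
bounded continuous functions on `ℝ^d`, `ε^d Σ_{x∈Ω_ε} f(x) → ∫_Ω f` uniformly in `f ∈ F`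
as `ε → 0`; in particular `ε^d · #Ω_ε` is bounded above and below. -/
theorem discrete_volume_measure_weak_convergence
    (d : ℕ) (hd : 2 ≤ d) (Ω : Set (EuclideanSpace ℝ (Fin d)))
    (hΩ : IsLipschitzDomain d Ω) (h0 : (0 : EuclideanSpace ℝ (Fin d)) ∈ Ω) :
    (∀ F : Set (EuclideanSpace ℝ (Fin d) → ℝ),
      (∃ M : ℝ, ∀ f ∈ F, ∀ x, |f x| ≤ M) →
      UniformEquicontinuous (fun f : F => (f : EuclideanSpace ℝ (Fin d) → ℝ)) →
      ∀ δ > (0:ℝ), ∃ ε₀ > (0:ℝ), ∀ ε ∈ Set.Ioo (0:ℝ) 1, ε < ε₀ → ∀ f ∈ F,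
        |ε ^ d * (∑ᶠ x ∈ discDomain Ω ε, f x) - ∫ x in Ω, f x| < δ)
    ∧ ∃ C : ℝ, 1 ≤ C ∧ ∀ ε ∈ Set.Ioo (0:ℝ) 1,
        C⁻¹ ≤ ε ^ d * ((discDomain Ω ε).ncard : ℝ)
          ∧ ε ^ d * ((discDomain Ω ε).ncard : ℝ) ≤ C := by
  have hd1 : 1 ≤ d := le_trans one_le_two hd
  have hΩo : IsOpen Ω := hΩ.1
  have hΩconn : IsConnected Ω := hΩ.2.1
  have hΩbdd : Bornology.IsBounded Ω := hΩ.2.2.1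
  have hΩmeas : MeasurableSet Ω := hΩo.measurableSet
  have hμΩ : volume Ω < ⊤ := hΩbdd.measure_lt_top
  obtain ⟨C₀, hC₀, hcount⟩ := count_bound hΩbdd
  -- Ωᶜ is nonempty
  have hΩne : Ωᶜ.Nonempty := by
    obtain ⟨R, hR⟩ := hΩbdd.subset_closedBall 0
    set i0 : Fin d := ⟨0, hd1⟩
    refine ⟨EuclideanSpace.single i0 (|R| + 1), fun hmem => ?_⟩
    have h1 := hR hmem
    rw [Metric.mem_closedBall] at h1
    have hnorm : dist (EuclideanSpace.single i0 (|R| + 1))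
        (0 : EuclideanSpace ℝ (Fin d)) = |R| + 1 := by
      rw [dist_zero_right, EuclideanSpace.norm_single, Real.norm_eq_abs,
        abs_of_pos (by positivity)]
    rw [hnorm] at h1
    cases abs_cases R <;> linarith
  have part1 : ∀ F : Set (EuclideanSpace ℝ (Fin d) → ℝ),
      (∃ M : ℝ, ∀ f ∈ F, ∀ x, |f x| ≤ M) →
      UniformEquicontinuous (fun f : F => (f : EuclideanSpace ℝ (Fin d) → ℝ)) →
      ∀ δ > (0:ℝ), ∃ ε₀ > (0:ℝ), ∀ ε ∈ Set.Ioo (0:ℝ) 1, ε < ε₀ → ∀ f ∈ F,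
        |ε ^ d * (∑ᶠ x ∈ discDomain Ω ε, f x) - ∫ x in Ω, f x| < δ := by
    intro F hFbd hFeq δ hδ
    obtain ⟨M0, hM0⟩ := hFbd
    set M := max M0 0 with hM_def
    have hM : ∀ f ∈ F, ∀ x, |f x| ≤ M := fun f hf x => le_trans (hM0 f hf x) (le_max_left _ _)
    have hM0' : 0 ≤ M := le_max_right _ _
    set δ₁ := δ / (4 * (C₀ + 1)) with hδ₁_def
    have hδ₁ : 0 < δ₁ := by positivity
    obtain ⟨r, hr, hreq⟩ := (uniformEquicontinuous_iff.1 hFeq) δ₁ hδ₁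
    set δ₂ := δ / (8 * (M + 1)) with hδ₂_def
    have hδ₂pos : 0 < δ₂ := by positivity
    -- interior exhaustion
    set W : ℕ → Set (EuclideanSpace ℝ (Fin d)) :=
      fun n => connectedComponentIn (Udom Ω (1/(n+1))) 0 with hW_def
    have hWmono : Monotone W := by
      intro n m hnm
      apply connectedComponentIn_mono
      apply Udom_anti
      apply one_div_le_one_div_of_le (by positivity)
      have : (n:ℝ) ≤ m := Nat.cast_le.2 hnm
      linarith
    have hWunion : (⋃ n : ℕ, W n) = Ω := Udom_exhaustion hΩo hΩconn hΩne h0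
    have hWmeas : ∀ n, MeasurableSet (W n) :=
      fun n => ((Udom_open Ω _).connectedComponentIn).measurableSet
    have htend : Tendsto (fun n => (volume (W n)).toReal) atTop (𝓝 (volume Ω).toReal) := by
      have h1 := tendsto_measure_iUnion_atTop (μ := volume) hWmono
      rw [hWunion] at h1
      exact (ENNReal.tendsto_toReal hμΩ.ne).comp h1
    obtain ⟨N, hN⟩ := (Metric.tendsto_atTop.1 htend) δ₂ hδ₂pos
    have hWNsub : W N ⊆ Ω :=
      (connectedComponentIn_subset _ _).trans (Udom_subset (by positivity))
    have hWNd : (volume (Ω \ W N)).toReal < δ₂ := by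
      have h1 : volume (Ω \ W N) = volume Ω - volume (W N) :=
        measure_diff hWNsub (hWmeas N).nullMeasurableSet
          (lt_of_le_of_lt (measure_mono hWNsub) hμΩ).ne
      rw [h1, ENNReal.toReal_sub_of_le (measure_mono hWNsub) hμΩ.ne]
      have h2 := hN N le_rfl
      rw [Real.dist_eq] at h2
      have := abs_lt.1 h2
      linarith [this.1, this.2]
    -- cthickening of the frontier
    have hfrnull := frontier_null hΩ
    have hfrbdd : Bornology.IsBounded (frontier Ω) :=
      (hΩbdd.closure).subset frontier_subset_closure
    have hcth : ∃ R > 0, volume (Metric.cthickening R (frontier Ω)) ≠ ⊤ :=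
      ⟨1, one_pos, ((hfrbdd.cthickening).measure_lt_top).ne⟩
    have htendc := tendsto_measure_cthickening_of_isClosed hcth isClosed_frontier
    rw [hfrnull] at htendc
    have hev : ∀ᶠ ρ in 𝓝 (0:ℝ),
        volume (Metric.cthickening ρ (frontier Ω)) < ENNReal.ofReal δ₂ :=
      htendc.eventually_lt_const (ENNReal.ofReal_pos.2 hδ₂pos)
    obtain ⟨r₁, hr₁pos, hr₁⟩ := Metric.eventually_nhds_iff.1 hev
    -- choice of ε₀
    refine ⟨min (min (r/(d+1)) (r₁/(d+1))) ((1/(N+1))/(2*d+1)), by positivity, ?_⟩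
    rintro ε ⟨hε0, hε1⟩ hεlt f hf
    have hεr : (d:ℝ) * ε < r := by
      have h1 : ε < r/(d+1) :=
        lt_of_lt_of_le hεlt ((min_le_left _ _).trans (min_le_left _ _))
      rw [lt_div_iff₀ (by positivity)] at h1
      nlinarith [Nat.cast_nonneg (α := ℝ) d]
    have hεr₁ : (d:ℝ) * ε < r₁ := by
      have h1 : ε < r₁/(d+1) :=
        lt_of_lt_of_le hεlt ((min_le_left _ _).trans (min_le_right _ _))
      rw [lt_div_iff₀ (by positivity)] at h1
      nlinarith [Nat.cast_nonneg (α := ℝ) d]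
    have hεN : 2 * (d:ℝ) * ε < 1/(N+1) := by
      have h1 : ε < (1/(N+1))/(2*d+1) := lt_of_lt_of_le hεlt (min_le_right _ _)
      rw [lt_div_iff₀ (by positivity)] at h1
      nlinarith [Nat.cast_nonneg (α := ℝ) d]
    -- the discrete set and its cubes
    have hSfin := discDomain_finite hε0 hΩbdd
    set Sf := hSfin.toFinset with hSf_def
    have hSmem : ∀ x ∈ Sf, x ∈ discDomain Ω ε := fun x hx => hSfin.mem_toFinset.1 hx
    have hf_cont : Continuous f := (hFeq.uniformContinuous ⟨f, hf⟩).continuous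
    have hf_bd : ∀ x, |f x| ≤ M := hM f hf
    have hpair : (↑Sf : Set (EuclideanSpace ℝ (Fin d))).Pairwise (Function.onFun Disjoint (cube ε)) :=
      fun x hx y hy hne => cube_disjoint hε0
        (discDomain_subset (hSmem x (Finset.mem_coe.1 hx))).1
        (discDomain_subset (hSmem y (Finset.mem_coe.1 hy))).1 hne
    have hcubemeas : ∀ x ∈ Sf, MeasurableSet (cube ε x) := fun x _ => cube_measurableSet _ _
    set T := ⋃ x ∈ Sf, cube ε x with hT_def
    have hTmeas : MeasurableSet T := Sf.measurableSet_biUnion hcubemeas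
    have hμT : volume T = (Sf.card : ℝ≥0∞) * ENNReal.ofReal (ε^d) := by
      rw [hT_def, measure_biUnion_finset hpair hcubemeas]
      simp only [cube_volume hε0, Finset.sum_const, nsmul_eq_mul]
    have hμT_lt : volume T < ⊤ := by
      rw [hμT]
      exact ENNReal.mul_lt_top (ENNReal.natCast_lt_top _) ENNReal.ofReal_lt_top
    have hcard : (Sf.card : ℝ) * ε^d ≤ C₀ := by
      have h1 := hcount ε ⟨hε0, hε1⟩
      have h2 : (discDomain Ω ε).ncard ≤ (latticePts d ε ∩ Ω).ncard :=
        Set.ncard_le_ncard discDomain_subset (lattice_finite hε0 hΩbdd)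
      have h3 : Sf.card = (discDomain Ω ε).ncard :=
        (Set.ncard_eq_toFinset_card _ hSfin).symm
      rw [h3]
      calc ((discDomain Ω ε).ncard : ℝ) * ε^d
          ≤ ((latticePts d ε ∩ Ω).ncard : ℝ) * ε^d := by
            apply mul_le_mul_of_nonneg_right _ (by positivity)
            exact_mod_cast h2
        _ = ε^d * ((latticePts d ε ∩ Ω).ncard : ℝ) := mul_comm _ _
        _ ≤ C₀ := h1
    -- integrability
    have hIntcube : ∀ x ∈ Sf, IntegrableOn f (cube ε x) volume := fun x _ =>
      integrableOn_of_bounded hf_cont hf_bd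
        (by rw [cube_volume hε0]; exact ENNReal.ofReal_lt_top)
    have hIntT : IntegrableOn f T volume := integrableOn_of_bounded hf_cont hf_bd hμT_lt
    have hIntΩ : IntegrableOn f Ω volume := integrableOn_of_bounded hf_cont hf_bd hμΩ
    -- Riemann sum vs integral over T
    have hTsum : ∫ x in T, f x = ∑ x ∈ Sf, ∫ y in cube ε x, f y :=
      integral_biUnion_finset Sf hcubemeas hpair hIntcube
    have hosc : ∀ x ∈ Sf, |ε^d * f x - ∫ y in cube ε x, f y| ≤ δ₁ * ε^d := by
      intro x hx
      have hvol : (volume (cube ε x)).toReal = ε^d := by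
        rw [cube_volume hε0, ENNReal.toReal_ofReal (by positivity)]
      have hcube_lt : volume (cube ε x) < ⊤ := by
        rw [cube_volume hε0]; exact ENNReal.ofReal_lt_top
      have hconst : ∫ _y in cube ε x, f x ∂volume = ε^d * f x := by
        rw [setIntegral_const, measureReal_def, hvol, smul_eq_mul]
      have hdiff : ∫ y in cube ε x, (f x - f y) ∂volume
          = ε^d * f x - ∫ y in cube ε x, f y := by
        rw [integral_sub (integrableOn_const (C := f x) hcube_lt.ne) (hIntcube x hx), hconst]
      rw [← hdiff, ← Real.norm_eq_abs]
      have hb := norm_setIntegral_le_of_norm_le_const (C := δ₁) (μ := volume)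
        (s := cube ε x) (f := fun y => f x - f y) hcube_lt ?_
      · rw [measureReal_def, hvol] at hb; exact hb
      · intro y hy
        rw [Real.norm_eq_abs, abs_sub_comm]
        have hdist : dist y x ≤ d * ε := mem_cube_dist_le hε0 hy
        have hlt : dist y x < r := lt_of_le_of_lt hdist hεr
        have happly := hreq y x hlt ⟨f, hf⟩
        rw [Real.dist_eq] at happly
        exact happly.le
    have hstep1 : |ε^d * (∑ x ∈ Sf, f x) - ∫ x in T, f x| ≤ δ₁ * C₀ := by
      rw [hTsum, Finset.mul_sum, ← Finset.sum_sub_distrib]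
      calc |∑ x ∈ Sf, (ε^d * f x - ∫ y in cube ε x, f y)|
          ≤ ∑ x ∈ Sf, |ε^d * f x - ∫ y in cube ε x, f y| :=
            Finset.abs_sum_le_sum_abs _ _
        _ ≤ ∑ _x ∈ Sf, δ₁ * ε^d := Finset.sum_le_sum hosc
        _ = Sf.card * (δ₁ * ε^d) := by rw [Finset.sum_const, nsmul_eq_mul]
        _ = δ₁ * (Sf.card * ε^d) := by ring
        _ ≤ δ₁ * C₀ := mul_le_mul_of_nonneg_left hcard hδ₁.le
    -- measure of T \ Ω
    have hTdiff : (volume (T \ Ω)).toReal ≤ δ₂ := by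
      have hsub : T \ Ω ⊆ Metric.cthickening ((d:ℝ)*ε) (frontier Ω) := by
        rintro z ⟨hzT, hzΩ⟩
        obtain ⟨x, hxSf, hzx⟩ := Set.mem_iUnion₂.1 hzT
        have hxΩ : x ∈ Ω := (discDomain_subset (hSmem x hxSf)).2
        obtain ⟨w, hw, hwd⟩ := frontier_cross hΩo hxΩ hzΩ
        apply Metric.mem_cthickening_of_dist_le z w _ _ hw
        calc dist z w ≤ dist z x := hwd
          _ ≤ d * ε := mem_cube_dist_le hε0 hzx
      have hlt : volume (T \ Ω) < ENNReal.ofReal δ₂ := by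
        apply lt_of_le_of_lt (measure_mono hsub)
        apply hr₁
        rw [Real.dist_eq, sub_zero, abs_of_nonneg (by positivity)]
        exact hεr₁
      exact ((ENNReal.lt_ofReal_iff_toReal_lt (ne_top_of_lt hlt)).1 hlt).le
    -- measure of Ω \ T
    have hWT : W N ⊆ T := by
      intro y hy
      have hmem := roundPt_mem_discDomain hΩo hd1 hε0 hεN hy
      apply Set.mem_biUnion (hSfin.mem_toFinset.2 hmem)
      intro i
      exact Set.mem_Ico.2 (mem_cube_roundPt hε0 y i)
    have hΩdiff : (volume (Ω \ T)).toReal ≤ δ₂ := by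
      have h2 : volume (Ω \ T) ≤ volume (Ω \ W N) :=
        measure_mono (Set.diff_subset_diff_right hWT)
      have h3 : volume (Ω \ W N) ≠ ⊤ :=
        (lt_of_le_of_lt (measure_mono Set.diff_subset) hμΩ).ne
      exact le_trans (ENNReal.toReal_mono h3 h2) hWNd.le
    -- comparison of the integrals
    have hsplit : |(∫ x in T, f x) - ∫ x in Ω, f x|
        ≤ M * ((volume (T\Ω)).toReal + (volume (Ω\T)).toReal) := by
      have hT_eq : ∫ x in T, f x = (∫ x in T ∩ Ω, f x) + ∫ x in T \ Ω, f x := by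
        rw [← setIntegral_union (Set.disjoint_left.2 (fun z hz1 hz2 => hz2.2 hz1.2))
          (hTmeas.diff hΩmeas) (hIntT.mono_set Set.inter_subset_left)
          (hIntT.mono_set Set.diff_subset), Set.inter_union_diff]
      have hΩ_eq : ∫ x in Ω, f x = (∫ x in T ∩ Ω, f x) + ∫ x in Ω \ T, f x := by
        rw [← setIntegral_union (Set.disjoint_left.2 (fun z hz1 hz2 => hz2.2 hz1.1))
          (hΩmeas.diff hTmeas) (hIntΩ.mono_set Set.inter_subset_right)
          (hIntΩ.mono_set Set.diff_subset)]
        rw [Set.inter_comm, Set.inter_union_diff]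
      rw [hT_eq, hΩ_eq]
      have hrw : (∫ x in T ∩ Ω, f x) + (∫ x in T \ Ω, f x)
          - ((∫ x in T ∩ Ω, f x) + ∫ x in Ω \ T, f x)
          = (∫ x in T \ Ω, f x) - ∫ x in Ω \ T, f x := by ring
      rw [hrw]
      have hb1 : |∫ x in T \ Ω, f x| ≤ M * (volume (T\Ω)).toReal := by
        rw [← Real.norm_eq_abs]
        apply norm_setIntegral_le_of_norm_le_const
          (lt_of_le_of_lt (measure_mono Set.diff_subset) hμT_lt)
          (fun y _ => by rw [Real.norm_eq_abs]; exact hf_bd y)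
      have hb2 : |∫ x in Ω \ T, f x| ≤ M * (volume (Ω\T)).toReal := by
        rw [← Real.norm_eq_abs]
        apply norm_setIntegral_le_of_norm_le_const
          (lt_of_le_of_lt (measure_mono Set.diff_subset) hμΩ)
          (fun y _ => by rw [Real.norm_eq_abs]; exact hf_bd y)
      calc |(∫ x in T \ Ω, f x) - ∫ x in Ω \ T, f x|
          ≤ |∫ x in T \ Ω, f x| + |∫ x in Ω \ T, f x| := abs_sub _ _
        _ ≤ M * (volume (T\Ω)).toReal + M * (volume (Ω\T)).toReal := add_le_add hb1 hb2
        _ = M * ((volume (T\Ω)).toReal + (volume (Ω\T)).toReal) := by ring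
    -- conclusion
    have hfinsum : (∑ᶠ x ∈ discDomain Ω ε, f x) = ∑ x ∈ Sf, f x := by
      have hh := finsum_mem_coe_finset f hSfin.toFinset
      rwa [Set.Finite.coe_toFinset hSfin] at hh
    rw [hfinsum]
    have hC1 : C₀ + 1 ≠ 0 := by positivity
    have hM1 : M + 1 ≠ 0 := by positivity
    calc |ε^d * ∑ x ∈ Sf, f x - ∫ x in Ω, f x|
        ≤ |ε^d * ∑ x ∈ Sf, f x - ∫ x in T, f x|
          + |(∫ x in T, f x) - ∫ x in Ω, f x| := abs_sub_le _ _ _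
      _ ≤ δ₁ * C₀ + M * ((volume (T\Ω)).toReal + (volume (Ω\T)).toReal) :=
          add_le_add hstep1 hsplit
      _ ≤ δ₁ * C₀ + M * (δ₂ + δ₂) := by
          apply add_le_add le_rfl
          exact mul_le_mul_of_nonneg_left (add_le_add hTdiff hΩdiff) hM0'
      _ < δ := by
          have h1 : δ₁ * C₀ = δ/4 - δ₁ := by
            rw [hδ₁_def]; field_simp; ring
          have h2 : M * (δ₂ + δ₂) = δ/4 - 2*δ₂ := by
            rw [hδ₂_def]; field_simp; ring
          linarith
  refine ⟨part1, ?_⟩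
  -- Part 2: apply part 1 to the constant family
  set c1 : EuclideanSpace ℝ (Fin d) → ℝ := fun _ => 1 with hc1
  have hbd : ∃ M : ℝ, ∀ f ∈ ({c1} : Set (EuclideanSpace ℝ (Fin d) → ℝ)), ∀ x, |f x| ≤ M := by
    refine ⟨1, ?_⟩
    rintro f hf x
    rw [Set.mem_singleton_iff] at hf
    subst hf
    simp [hc1]
  have hec : UniformEquicontinuous
      (fun f : ({c1} : Set (EuclideanSpace ℝ (Fin d) → ℝ)) =>
        (f : EuclideanSpace ℝ (Fin d) → ℝ)) := by
    rw [uniformEquicontinuous_iff]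
    intro t ht
    refine ⟨1, one_pos, fun x y _ i => ?_⟩
    have hi : (i : EuclideanSpace ℝ (Fin d) → ℝ) = c1 := Set.mem_singleton_iff.1 i.2
    rw [hi]
    simpa [hc1] using ht
  set v := (volume Ω).toReal with hv_def
  have hv : 0 < v :=
    ENNReal.toReal_pos (IsOpen.measure_pos volume hΩo ⟨0, h0⟩).ne' hμΩ.ne
  have hint1 : (∫ _x in Ω, (1:ℝ)) = v := by
    rw [setIntegral_const, smul_eq_mul, mul_one, measureReal_def]
  obtain ⟨ε₀, hε₀pos, hconv⟩ := part1 {c1} hbd hec (v/2) (by positivity)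
  set a := min ε₀ 1 with ha_def
  have ha : 0 < a := lt_min hε₀pos one_pos
  set L := min (v/2) (a^d) with hL_def
  have hLpos : 0 < L := lt_min (by positivity) (by positivity)
  refine ⟨max 1 (max L⁻¹ C₀), le_max_left _ _, ?_⟩
  rintro ε ⟨hε0, hε1⟩
  have hεIoo : ε ∈ Set.Ioo (0:ℝ) 1 := ⟨hε0, hε1⟩
  have hSfin := discDomain_finite hε0 hΩbdd
  have hncard_sum : (∑ᶠ x ∈ discDomain Ω ε, c1 x) = ((discDomain Ω ε).ncard : ℝ) := by
    have hh := finsum_mem_coe_finset c1 hSfin.toFinset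
    rw [Set.Finite.coe_toFinset hSfin] at hh
    rw [hh]
    have hcard : (discDomain Ω ε).ncard = hSfin.toFinset.card :=
      Set.ncard_eq_toFinset_card _ hSfin
    rw [hcard]
    simp [hc1]
  have hupper : ε^d * ((discDomain Ω ε).ncard : ℝ) ≤ C₀ := by
    have h2 : (discDomain Ω ε).ncard ≤ (latticePts d ε ∩ Ω).ncard :=
      Set.ncard_le_ncard discDomain_subset (lattice_finite hε0 hΩbdd)
    calc ε^d * ((discDomain Ω ε).ncard : ℝ)
        ≤ ε^d * ((latticePts d ε ∩ Ω).ncard : ℝ) := by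
          apply mul_le_mul_of_nonneg_left _ (by positivity)
          exact_mod_cast h2
      _ ≤ C₀ := hcount ε hεIoo
  have hlower : L ≤ ε^d * ((discDomain Ω ε).ncard : ℝ) := by
    by_cases hcase : ε < ε₀
    · have hcv := hconv ε hεIoo hcase c1 rfl
      rw [hncard_sum] at hcv
      have hint1' : (∫ x in Ω, c1 x) = v := hint1
      rw [hint1'] at hcv
      have habs := abs_lt.1 hcv
      calc L ≤ v/2 := min_le_left _ _
        _ ≤ ε^d * ((discDomain Ω ε).ncard : ℝ) := by linarith [habs.1]
    · push_neg at hcase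
      have haε : a ≤ ε := le_trans (min_le_left _ _) hcase
      have h0S : (0 : EuclideanSpace ℝ (Fin d)) ∈ discDomain Ω ε :=
        zero_mem_discDomain hd1 hε0 h0
      have hn1 : 1 ≤ (discDomain Ω ε).ncard := by
        have := (Set.ncard_pos hSfin).2 ⟨0, h0S⟩
        omega
      calc L ≤ a^d := min_le_right _ _
        _ ≤ ε^d := pow_le_pow_left₀ ha.le haε d
        _ = ε^d * 1 := (mul_one _).symm
        _ ≤ ε^d * ((discDomain Ω ε).ncard : ℝ) := by
            apply mul_le_mul_of_nonneg_left _ (by positivity)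
            exact_mod_cast hn1
  constructor
  · have hCpos : 0 < max 1 (max L⁻¹ C₀) := lt_of_lt_of_le one_pos (le_max_left _ _)
    have h1 : L⁻¹ ≤ max 1 (max L⁻¹ C₀) := le_trans (le_max_left _ _) (le_max_right _ _)
    have h2 : (max 1 (max L⁻¹ C₀))⁻¹ ≤ L := by
      rw [inv_le_comm₀ hCpos hLpos]
      exact h1
    exact le_trans h2 hlower
  · exact le_trans hupper (le_trans (le_max_right _ _) (le_max_right _ _))

end
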